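/- arXiv:2003.03888 — 3 statements merged into one kernel-verified Lean document; each statement's English description precedes it below -/
import Mathlib

section
/- Let σ₁,...,σₙ be independent Rademacher random variables. Then E[|∑_{i=1}^n σ_i|] ≥ √(n/2). -/
open Finset

/-- Central binomial lower bound: `16^m ≤ 4m * B(m)^2` for `m ≥ 1`. -/
lemma key_binom : ∀ m : ℕ, 1 ≤ m → 16 ^ m ≤ 4 * m * (Nat.centralBinom m) ^ 2 := by
  intro m hm
  induction m with
  | zero => omega
  | succ m ih =>
    rcases Nat.eq_zero_or_pos m with h0 | h1
    · subst h0; decide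
    · have ih' := ih h1
      have hB := Nat.succ_mul_centralBinom_succ m
      set B := Nat.centralBinom m with hBdef
      have key : (m+1)^2 * 16^(m+1) ≤ (m+1)^2 * (4*(m+1)*(Nat.centralBinom (m+1))^2) := by
        have h2 : (m+1)^2 * (4*(m+1)*(Nat.centralBinom (m+1))^2)
            = 4*(m+1)*((m+1)*Nat.centralBinom (m+1))^2 := by ring
        rw [h2, hB]
        calc (m+1)^2 * 16^(m+1) = 16*(m+1)^2 * 16^m := by ring
          _ ≤ 16*(m+1)^2 * (4*m*B^2) := Nat.mul_le_mul_left _ ih'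
          _ ≤ 4*(m+1)*(2*(2*m+1)*B)^2 := by nlinarith [sq_nonneg B, h1]
      exact Nat.le_of_mul_le_mul_left key (by positivity)

/-- The basic summand identity over `ℤ`. -/
lemma choose_step (n M : ℕ) :
    (n.choose (M+1) : ℤ) * ((n : ℤ) - 2*((M:ℤ)+1))
      = (n : ℤ) * ((n-1).choose (M+1)) - (n : ℤ) * ((n-1).choose M) := by
  cases n with
  | zero => simp [Nat.choose_eq_zero_of_lt (Nat.succ_pos M)]
  | succ m =>
    have hp' : ((m+1).choose (M+1) : ℤ) = m.choose M + m.choose (M+1) := by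
      exact_mod_cast Nat.choose_succ_succ' m M
    have hs' : ((m:ℤ)+1) * m.choose M = (m+1).choose (M+1) * ((M:ℤ)+1) := by
      exact_mod_cast Nat.add_one_mul_choose_eq m M
    simp only [Nat.succ_sub_one]
    push_cast
    linear_combination ((m:ℤ)+1) * hp' + 2 * hs'

/-- Telescoping sum: `∑_{k=0}^{M} C(n,k)(n-2k) = n C(n-1, M)`. -/
lemma tele (n : ℕ) : ∀ M : ℕ,
    ∑ k ∈ range (M+1), (n.choose k : ℤ) * ((n:ℤ) - 2*(k:ℤ)) = (n:ℤ) * ((n-1).choose M) := by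
  intro M
  induction M with
  | zero => simp
  | succ M ih =>
    rw [Finset.sum_range_succ, ih]
    have h := choose_step n M
    push_cast at h ⊢
    linarith
lemma sum_abs_eq (n : ℕ) (hn : 1 ≤ n) :
    ∑ k ∈ range (n+1), (n.choose k : ℤ) * |(2*(k:ℤ)) - n|
      = 2 * n * ((n-1).choose (n/2)) := by
  set m := n/2 with hm
  have h1 : m + 1 ≤ n + 1 := by omega
  rw [← Finset.sum_range_add_sum_Ico _ h1]
  have lo : ∑ k ∈ range (m+1), (n.choose k : ℤ) * |(2*(k:ℤ)) - n|
      = (n:ℤ) * ((n-1).choose m) := by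
    rw [← tele n m]
    apply Finset.sum_congr rfl
    intro k hk
    have hk' : k ≤ m := Nat.lt_succ_iff.mp (Finset.mem_range.mp hk)
    have hle : (2*(k:ℤ)) - n ≤ 0 := by omega
    rw [abs_of_nonpos hle]
    ring
  have hi : ∑ k ∈ Ico (m+1) (n+1), (n.choose k : ℤ) * |(2*(k:ℤ)) - n|
      = (n:ℤ) * ((n-1).choose m) := by
    have hre : ∑ k ∈ Ico (m+1) (n+1), (n.choose k : ℤ) * |(2*(k:ℤ)) - n|
        = ∑ j ∈ range (n - m), (n.choose j : ℤ) * ((n:ℤ) - 2*(j:ℤ)) := by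
      apply Finset.sum_nbij' (fun k => n - k) (fun j => n - j)
      · intro k hk
        simp only [Finset.mem_Ico] at hk
        simp only [Finset.mem_range]
        omega
      · intro j hj
        simp only [Finset.mem_range] at hj
        simp only [Finset.mem_Ico]
        omega
      · intro k hk
        simp only [Finset.mem_Ico] at hk
        omega
      · intro j hj
        simp only [Finset.mem_range] at hj
        omega
      · intro k hk
        simp only [Finset.mem_Ico] at hk
        have hkn : k ≤ n := by omega
        have hsym : n.choose (n - k) = n.choose k := Nat.choose_symm hkn
        have habs : |(2*(k:ℤ)) - n| = 2*(k:ℤ) - n := by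
          apply abs_of_nonneg
          omega
        rw [hsym, habs, Nat.cast_sub hkn]
        ring
    rw [hre]
    have hnm : n - m = (n - m - 1) + 1 := by omega
    rw [hnm, tele n (n - m - 1)]
    congr 1
    have h3 : n - m - 1 = (n-1) - m := by omega
    rw [h3, Nat.choose_symm (by omega)]
  rw [lo, hi]
  push_cast
  ring

/-- Counting boolean vectors with exactly `k` trues. -/
lemma card_fiber (n k : ℕ) :
    (Finset.univ.filter fun σ : Fin n → Bool =>
      (Finset.univ.filter fun i => σ i = true).card = k).card = n.choose k := by
  have hpc := Finset.card_powersetCard k (Finset.univ : Finset (Fin n))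
  rw [Finset.card_univ, Fintype.card_fin] at hpc
  rw [← hpc]
  apply Finset.card_nbij' (fun σ => Finset.univ.filter fun i => σ i = true)
    (fun s i => decide (i ∈ s))
  · intro σ hσ
    simp only [Finset.mem_coe, Finset.mem_filter, Finset.mem_univ, true_and] at hσ
    simp [Finset.mem_powersetCard, hσ]
  · intro s hs
    simp only [Finset.mem_coe, Finset.mem_powersetCard] at hs
    simp only [Finset.mem_coe, Finset.mem_filter, Finset.mem_univ, true_and]
    rw [← hs.2]
    congr 1
    ext i
    simp
  · intro σ hσ
    funext i
    simp
  · intro s hs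
    ext i
    simp

/-- Hypercube sum equals binomial sum. -/
lemma cube_sum_eq (n : ℕ) :
    (∑ σ : Fin n → Bool, |∑ i, (if σ i then (1 : ℝ) else -1)|)
      = ∑ k ∈ range (n+1), (n.choose k : ℝ) * |2*(k:ℝ) - n| := by
  have hval : ∀ σ : Fin n → Bool,
      (∑ i, (if σ i then (1 : ℝ) else -1))
        = 2 * ((Finset.univ.filter fun i => σ i = true).card : ℝ) - n := by
    intro σ
    have h : ∀ i : Fin n, (if σ i then (1 : ℝ) else -1)
        = 2 * (if σ i = true then (1:ℝ) else 0) - 1 := by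
      intro i; cases hh : σ i <;> simp [hh] <;> norm_num
    rw [Finset.sum_congr rfl fun i _ => h i]
    rw [Finset.sum_sub_distrib, ← Finset.mul_sum, Finset.sum_boole]
    simp [Finset.card_univ]
  calc (∑ σ : Fin n → Bool, |∑ i, (if σ i then (1 : ℝ) else -1)|)
      = ∑ σ : Fin n → Bool,
          (fun k : ℕ => |2 * (k : ℝ) - n|)
            ((Finset.univ.filter fun i => σ i = true).card) := by
        apply Finset.sum_congr rfl
        intro σ _
        rw [hval σ]
    _ = ∑ k ∈ range (n+1), ∑ _σ ∈ Finset.univ.filter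
          (fun σ : Fin n → Bool => (Finset.univ.filter fun i => σ i = true).card = k),
          (fun k : ℕ => |2 * (k : ℝ) - n|) k := by
        refine (Finset.sum_fiberwise_of_maps_to'
          (g := fun σ : Fin n → Bool => (Finset.univ.filter fun i => σ i = true).card)
          ?_ (fun k : ℕ => |2 * (k : ℝ) - n|)).symm
        intro σ _
        simp only [Finset.mem_range]
        have hle := Finset.card_filter_le (Finset.univ : Finset (Fin n))
          (fun i => σ i = true)
        simp only [Finset.card_univ, Fintype.card_fin] at hle
        omega
    _ = ∑ k ∈ range (n+1), (n.choose k : ℝ) * |2*(k:ℝ) - n| := by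
        apply Finset.sum_congr rfl
        intro k _
        rw [Finset.sum_const, card_fiber, nsmul_eq_mul]

/-- The key arithmetic bound in `ℕ`. -/
lemma nat_bound (n : ℕ) (hn : 1 ≤ n) :
    n * 4^n ≤ 8 * n^2 * ((n-1).choose (n/2))^2 := by
  rcases Nat.even_or_odd n with he | ho
  · obtain ⟨m, hm⟩ := he
    have hm' : n = 2*m := by omega
    subst hm'
    obtain ⟨j, rfl⟩ : ∃ j, m = j + 1 := ⟨m-1, by omega⟩
    set m := j + 1 with hmj
    have hdiv : 2*m/2 = m := by omega
    have hC : Nat.centralBinom m = 2 * ((2*m-1).choose m) := by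
      have ha : 2*m - 1 = 2*j+1 := by omega
      rw [Nat.centralBinom, ha, show 2*m = (2*j+1)+1 by omega, show m = j + 1 from rfl,
        Nat.choose_succ_succ']
      have h2 : (2*j+1).choose j = (2*j+1).choose (j+1) := by
        have h4 := Nat.choose_symm (n := 2*j+1) (k := j+1) (by omega)
        rw [show 2*j+1 - (j+1) = j by omega] at h4
        exact h4
      omega
    have hkey := key_binom m (by omega)
    have h4n : (4:ℕ)^(2*m) = 16^m := by
      rw [pow_mul]; norm_num
    rw [hdiv, h4n]
    have hsq : Nat.centralBinom m ^ 2 = 4 * ((2*m-1).choose m)^2 := by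
      rw [hC]; ring
    calc 2*m * 16^m ≤ 2*m * (4*m*(Nat.centralBinom m)^2) := Nat.mul_le_mul_left _ hkey
      _ = 8 * (2*m)^2 * ((2*m-1).choose m)^2 := by rw [hsq]; ring
  · obtain ⟨m, hm⟩ := ho
    subst hm
    have hdiv : (2*m+1)/2 = m := by omega
    have hsub : 2*m+1-1 = 2*m := by omega
    rw [hdiv, hsub]
    have hC : (2*m).choose m = Nat.centralBinom m := rfl
    rw [hC]
    have hkey : 16^m ≤ 2*(2*m+1) * (Nat.centralBinom m)^2 := by
      rcases Nat.eq_zero_or_pos m with h0 | h1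
      · subst h0; decide
      · calc 16^m ≤ 4*m*(Nat.centralBinom m)^2 := key_binom m h1
          _ ≤ 2*(2*m+1) * (Nat.centralBinom m)^2 := by
              apply Nat.mul_le_mul_right
              omega
    have h4n : (4:ℕ)^(2*m+1) = 4 * 16^m := by
      rw [pow_succ, pow_mul]; norm_num; ring
    rw [h4n]
    calc (2*m+1) * (4 * 16^m)
        ≤ (2*m+1) * (4 * (2*(2*m+1) * (Nat.centralBinom m)^2)) := by
          exact Nat.mul_le_mul_left _ (Nat.mul_le_mul_left _ hkey)
      _ = 8 * (2*m+1)^2 * (Nat.centralBinom m)^2 := by ring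

/-- Khintchine lower bound: E|∑ σᵢ| ≥ √(n/2) for n independent Rademacher signs. -/
theorem rademacher_abs_sum_ge_sqrt (n : ℕ) :
    Real.sqrt ((n : ℝ) / 2) ≤
      (∑ σ : Fin n → Bool, |∑ i, (if σ i then (1 : ℝ) else -1)|) / 2 ^ n := by
  rcases Nat.eq_zero_or_pos n with h0 | hn
  · subst h0; simp
  have hsumZ := sum_abs_eq n hn
  have hsum : (∑ σ : Fin n → Bool, |∑ i, (if σ i then (1 : ℝ) else -1)|)
      = ((2 * n * ((n-1).choose (n/2)) : ℕ) : ℝ) := by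
    rw [cube_sum_eq n]
    have hterm : ∀ k ∈ range (n+1), (n.choose k : ℝ) * |2*(k:ℝ) - n|
        = (((n.choose k : ℤ) * |(2*(k:ℤ)) - n| : ℤ) : ℝ) := by
      intro k _
      push_cast
      ring
    rw [Finset.sum_congr rfl hterm, ← Int.cast_sum, hsumZ]
    push_cast
    ring
  rw [hsum]
  set T : ℕ := 2 * n * ((n-1).choose (n/2)) with hT
  have hA : (0:ℝ) ≤ (T:ℝ) / 2^n := by positivity
  have hsq : ((n:ℝ)/2) ≤ ((T:ℝ)/2^n)^2 := by
    have hNat : n * 4^n ≤ 2 * T^2 := by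
      calc n * 4^n ≤ 8 * n^2 * ((n-1).choose (n/2))^2 := nat_bound n hn
        _ = 2 * T^2 := by rw [hT]; ring
    have hNat' : (n:ℝ) * 4^n ≤ 2 * (T:ℝ)^2 := by exact_mod_cast hNat
    have h2n : ((2:ℝ)^n)^2 = 4^n := by
      rw [← pow_mul, mul_comm, pow_mul]
      norm_num
    rw [div_pow, h2n, div_le_div_iff₀ (by norm_num) (by positivity)]
    linarith
  calc Real.sqrt ((n:ℝ)/2) ≤ Real.sqrt (((T:ℝ)/2^n)^2) := Real.sqrt_le_sqrt hsq
    _ = (T:ℝ)/2^n := Real.sqrt_sq hA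
end

section
/- Let H be a real inner product space, Φ₁,...,Φₙ ∈ H with ‖Φᵢ‖ ≤ 1 for all i, and σ₁,...,σₙ independent Rademacher variables. Define the Rademacher complexity R_n = E_σ[ sup_{c ∈ H, ‖c‖ ≤ 1} ∑_{i=1}^n σ_i ‖Φ_i − c‖² ]. Then R_n ≤ 3√n. -/
lemma flip_sum_eq_zero {n : ℕ} (i : Fin n) (g : (Fin n → Bool) → ℝ)
    (hg : ∀ σ, g (Function.update σ i (!(σ i))) = - g σ) :
    ∑ σ : Fin n → Bool, g σ = 0 := by
  have hinv : Function.Involutive (fun σ : Fin n → Bool => Function.update σ i (!(σ i))) := by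
    intro σ
    simp [Function.update_idem]
  have h1 : ∑ σ : Fin n → Bool, g (⇑hinv.toPerm σ) = ∑ σ : Fin n → Bool, g σ :=
    Equiv.sum_comp _ g
  simp only [Function.Involutive.coe_toPerm, hg, Finset.sum_neg_distrib] at h1
  linarith

lemma eps_sum {n : ℕ} (i : Fin n) :
    ∑ σ : Fin n → Bool, (if σ i then (1:ℝ) else -1) = 0 :=
  flip_sum_eq_zero i _ (fun σ => by
    simp only [Function.update_self]
    cases σ i <;> simp)

lemma eps_mul_sum {n : ℕ} {i j : Fin n} (hij : i ≠ j) :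
    ∑ σ : Fin n → Bool, (if σ i then (1:ℝ) else -1) * (if σ j then (1:ℝ) else -1) = 0 :=
  flip_sum_eq_zero i _ (fun σ => by
    rw [Function.update_self, Function.update_of_ne (Ne.symm hij)]
    cases σ i <;> cases σ j <;> norm_num)

lemma eps_card {n : ℕ} : (Finset.univ : Finset (Fin n → Bool)).card = 2 ^ n := by
  simp [Finset.card_univ]

lemma eps_diag {n : ℕ} (i j : Fin n) :
    ∑ σ : Fin n → Bool, (if σ i then (1:ℝ) else -1) * (if σ j then (1:ℝ) else -1)
      = if i = j then (2:ℝ)^n else 0 := by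
  by_cases h : i = j
  · subst h
    rw [if_pos rfl]
    have h1 : ∀ σ : Fin n → Bool, (if σ i then (1:ℝ) else -1) * (if σ i then (1:ℝ) else -1) = 1 :=
      fun σ => by cases σ i <;> norm_num
    rw [Finset.sum_congr rfl fun σ _ => h1 σ, Finset.sum_const, eps_card]
    simp
  · rw [if_neg h]
    exact eps_mul_sum h

lemma sup_le_bound {H : Type*} [NormedAddCommGroup H] [InnerProductSpace ℝ H] {n : ℕ}
    (Φ : Fin n → H) (σ : Fin n → Bool) :
    sSup ((fun c : H => ∑ i, (if σ i then (1:ℝ) else -1) * ‖Φ i - c‖ ^ 2) '' {c : H | ‖c‖ ≤ 1})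
      ≤ (∑ i, (if σ i then (1:ℝ) else -1) * ‖Φ i‖ ^ 2)
        + 2 * ‖∑ i, (if σ i then (1:ℝ) else -1) • Φ i‖
        + |∑ i, (if σ i then (1:ℝ) else -1)| := by
  apply csSup_le (Set.Nonempty.image _ ⟨0, by simp⟩)
  rintro x ⟨c, hc, rfl⟩
  simp only [Set.mem_setOf_eq] at hc
  dsimp only
  have expand : (∑ i, (if σ i then (1:ℝ) else -1) * ‖Φ i - c‖ ^ 2)
      = (∑ i, (if σ i then (1:ℝ) else -1) * ‖Φ i‖ ^ 2)
        - 2 * (inner ℝ (∑ i, (if σ i then (1:ℝ) else -1) • Φ i) c : ℝ)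
        + (∑ i, (if σ i then (1:ℝ) else -1)) * ‖c‖ ^ 2 := by
    rw [sum_inner]
    simp only [real_inner_smul_left]
    rw [Finset.mul_sum, Finset.sum_mul, ← Finset.sum_sub_distrib, ← Finset.sum_add_distrib]
    refine Finset.sum_congr rfl fun i _ => ?_
    rw [@norm_sub_sq_real]
    ring
  rw [expand]
  set T := ∑ i, (if σ i then (1:ℝ) else -1) • Φ i with hT
  set s := ∑ i, (if σ i then (1:ℝ) else -1) with hs
  have habs : |(inner ℝ T c : ℝ)| ≤ ‖T‖ * ‖c‖ := abs_real_inner_le_norm T c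
  have hTn : (0:ℝ) ≤ ‖T‖ := norm_nonneg _
  have hcn : (0:ℝ) ≤ ‖c‖ := norm_nonneg _
  have h1 : -(inner ℝ T c : ℝ) ≤ ‖T‖ := by
    have := (abs_le.mp habs).1
    nlinarith
  have h2 : s * ‖c‖ ^ 2 ≤ |s| := by
    have h3 : s ≤ |s| := le_abs_self s
    have h4 : (0:ℝ) ≤ |s| := abs_nonneg s
    have h5 : ‖c‖ ^ 2 ≤ 1 := by nlinarith
    nlinarith [mul_nonneg (sub_nonneg.mpr h3) (sq_nonneg ‖c‖),
      mul_nonneg h4 (sub_nonneg.mpr h5)]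
  nlinarith

/-- The Rademacher complexity of the single-center squared-distance class is at most 3√n. -/
theorem rademacher_complexity_center_class_le {H : Type*} [NormedAddCommGroup H]
    [InnerProductSpace ℝ H] (n : ℕ) (Φ : Fin n → H) (hΦ : ∀ i, ‖Φ i‖ ≤ 1) :
    (∑ σ : Fin n → Bool,
        sSup ((fun c : H => ∑ i, (if σ i then (1 : ℝ) else -1) * ‖Φ i - c‖ ^ 2) ''
          {c : H | ‖c‖ ≤ 1})) / 2 ^ n ≤ 3 * Real.sqrt n := by
  -- first moment vanishes
  have hA : ∑ σ : Fin n → Bool, ∑ i, (if σ i then (1:ℝ) else -1) * ‖Φ i‖ ^ 2 = 0 := by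
    rw [Finset.sum_comm]
    refine Finset.sum_eq_zero fun i _ => ?_
    rw [← Finset.sum_mul, eps_sum, zero_mul]
  -- second moments
  have hS2 : ∑ σ : Fin n → Bool, (∑ i, (if σ i then (1:ℝ) else -1)) ^ 2 = (n:ℝ) * 2 ^ n := by
    have hsq : ∀ σ : Fin n → Bool, (∑ i, (if σ i then (1:ℝ) else -1)) ^ 2
        = ∑ i, ∑ j, (if σ i then (1:ℝ) else -1) * (if σ j then (1:ℝ) else -1) := by
      intro σ; rw [sq, Finset.sum_mul_sum]
    calc ∑ σ : Fin n → Bool, (∑ i, (if σ i then (1:ℝ) else -1)) ^ 2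
        = ∑ i, ∑ j, ∑ σ : Fin n → Bool,
            (if σ i then (1:ℝ) else -1) * (if σ j then (1:ℝ) else -1) := by
          simp only [hsq]
          rw [Finset.sum_comm]
          exact Finset.sum_congr rfl fun i _ => Finset.sum_comm
      _ = ∑ i : Fin n, (2:ℝ) ^ n := by
          refine Finset.sum_congr rfl fun i _ => ?_
          rw [Finset.sum_congr rfl fun j _ => eps_diag i j]
          simp
      _ = (n:ℝ) * 2 ^ n := by simp [Finset.sum_const, mul_comm]
  have hT2 : ∑ σ : Fin n → Bool, ‖∑ i, (if σ i then (1:ℝ) else -1) • Φ i‖ ^ 2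
      ≤ (n:ℝ) * 2 ^ n := by
    have hsq : ∀ σ : Fin n → Bool, ‖∑ i, (if σ i then (1:ℝ) else -1) • Φ i‖ ^ 2
        = ∑ i, ∑ j, (if σ i then (1:ℝ) else -1) * (if σ j then (1:ℝ) else -1)
            * (inner ℝ (Φ i) (Φ j) : ℝ) := by
      intro σ
      rw [← real_inner_self_eq_norm_sq, sum_inner]
      refine Finset.sum_congr rfl fun i _ => ?_
      rw [real_inner_smul_left, inner_sum, Finset.mul_sum]
      refine Finset.sum_congr rfl fun j _ => ?_
      rw [real_inner_smul_right]
      ring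
    calc ∑ σ : Fin n → Bool, ‖∑ i, (if σ i then (1:ℝ) else -1) • Φ i‖ ^ 2
        = ∑ i, ∑ j, (∑ σ : Fin n → Bool,
            (if σ i then (1:ℝ) else -1) * (if σ j then (1:ℝ) else -1)) * (inner ℝ (Φ i) (Φ j) : ℝ) := by
          simp only [hsq]
          rw [Finset.sum_comm]
          refine Finset.sum_congr rfl fun i _ => ?_
          rw [Finset.sum_comm]
          refine Finset.sum_congr rfl fun j _ => ?_
          rw [Finset.sum_mul]
      _ = ∑ i : Fin n, (2:ℝ) ^ n * ‖Φ i‖ ^ 2 := by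
          refine Finset.sum_congr rfl fun i _ => ?_
          rw [Finset.sum_congr rfl fun j _ => by rw [eps_diag]]
          simp [real_inner_self_eq_norm_sq]
      _ ≤ ∑ i : Fin n, (2:ℝ) ^ n := by
          refine Finset.sum_le_sum fun i _ => ?_
          have h1 : ‖Φ i‖ ^ 2 ≤ 1 := by
            have := hΦ i
            nlinarith [norm_nonneg (Φ i)]
          nlinarith [pow_pos (by norm_num : (0:ℝ) < 2) n]
      _ = (n:ℝ) * 2 ^ n := by simp [Finset.sum_const, mul_comm]
  -- Cauchy-Schwarz step
  have cs : ∀ f : (Fin n → Bool) → ℝ, (∀ σ, 0 ≤ f σ) →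
      (∑ σ : Fin n → Bool, f σ ^ 2) ≤ (n:ℝ) * 2 ^ n →
      ∑ σ : Fin n → Bool, f σ ≤ 2 ^ n * Real.sqrt n := by
    intro f hf h2
    have h1 : (∑ σ : Fin n → Bool, f σ) ^ 2 ≤ ((2:ℝ) ^ n) ^ 2 * n := by
      have := sq_sum_le_card_mul_sum_sq (s := (Finset.univ : Finset (Fin n → Bool))) (f := f)
      rw [eps_card] at this
      push_cast at this
      nlinarith [pow_pos (by norm_num : (0:ℝ) < 2) n]
    have h0 : 0 ≤ ∑ σ : Fin n → Bool, f σ := Finset.sum_nonneg fun σ _ => hf σ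
    calc ∑ σ : Fin n → Bool, f σ = Real.sqrt ((∑ σ : Fin n → Bool, f σ) ^ 2) :=
          (Real.sqrt_sq h0).symm
      _ ≤ Real.sqrt (((2:ℝ) ^ n) ^ 2 * n) := Real.sqrt_le_sqrt h1
      _ = 2 ^ n * Real.sqrt n := by
          rw [Real.sqrt_mul (sq_nonneg _), Real.sqrt_sq (by positivity)]
  have hSsum : ∑ σ : Fin n → Bool, |∑ i, (if σ i then (1:ℝ) else -1)| ≤ 2 ^ n * Real.sqrt n := by
    refine cs _ (fun σ => abs_nonneg _) ?_
    simp only [sq_abs]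
    exact hS2.le
  have hTsum : ∑ σ : Fin n → Bool, ‖∑ i, (if σ i then (1:ℝ) else -1) • Φ i‖
      ≤ 2 ^ n * Real.sqrt n := by
    exact cs _ (fun σ => norm_nonneg _) hT2
  have main : ∑ σ : Fin n → Bool,
      sSup ((fun c : H => ∑ i, (if σ i then (1 : ℝ) else -1) * ‖Φ i - c‖ ^ 2) ''
        {c : H | ‖c‖ ≤ 1}) ≤ 3 * Real.sqrt n * 2 ^ n := by
    calc ∑ σ : Fin n → Bool, sSup _
        ≤ ∑ σ : Fin n → Bool, ((∑ i, (if σ i then (1:ℝ) else -1) * ‖Φ i‖ ^ 2)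
            + 2 * ‖∑ i, (if σ i then (1:ℝ) else -1) • Φ i‖
            + |∑ i, (if σ i then (1:ℝ) else -1)|) :=
          Finset.sum_le_sum fun σ _ => sup_le_bound Φ σ
      _ = (∑ σ : Fin n → Bool, ∑ i, (if σ i then (1:ℝ) else -1) * ‖Φ i‖ ^ 2)
            + 2 * (∑ σ : Fin n → Bool, ‖∑ i, (if σ i then (1:ℝ) else -1) • Φ i‖)
            + ∑ σ : Fin n → Bool, |∑ i, (if σ i then (1:ℝ) else -1)| := by
          rw [Finset.sum_add_distrib, Finset.sum_add_distrib, ← Finset.mul_sum]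
      _ ≤ 0 + 2 * (2 ^ n * Real.sqrt n) + 2 ^ n * Real.sqrt n := by
          rw [hA]
          have := hTsum
          have := hSsum
          linarith
      _ = 3 * Real.sqrt n * 2 ^ n := by ring
  rw [div_le_iff₀ (by positivity : (0:ℝ) < 2 ^ n)]
  exact main
end

section
/- Fix k ≥ 1 and n divisible by k. Let e₁,...,e_k be orthonormal vectors in a real Hilbert space H, and take the data Φ₁,...,Φₙ with exactly n/k copies of each e_j. For σ ∈ {±1}^k define g_σ(x) = min_{1≤i≤k} ‖Φ_x − σ_i e_i‖² where Φ_x is the data point. Then the empirical Rademacher complexity E_{σ'}[ max_{σ ∈ {±1}^k} ∑_{t=1}^n σ'_t g_σ(x_t) ] is at least √(kn/2). -/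
open Finset

noncomputable def Sg {m : ℕ} (f : Fin m → Bool) : ℝ := ∑ i, (if f i then (1:ℝ) else -1)

lemma sum_split {m : ℕ} (F : (Fin (m+1) → Bool) → ℝ) :
    ∑ f, F f = ∑ b : Bool, ∑ g : Fin m → Bool, F (Fin.cons b g) := by
  rw [← Fintype.sum_prod_type (fun p : Bool × (Fin m → Bool) => F (Fin.cons p.1 p.2))]
  exact Fintype.sum_equiv (Fin.consEquiv (fun _ : Fin (m+1) => Bool)).symm _ _ (fun f => by
    simp only [Fin.consEquiv, Equiv.coe_fn_symm_mk]
    congr 1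
    exact (Fin.cons_self_tail f).symm)

lemma Sg_cons {m : ℕ} (b : Bool) (g : Fin m → Bool) :
    Sg (Fin.cons b g) = (if b then (1:ℝ) else -1) + Sg g := by
  simp [Sg, Fin.sum_univ_succ]

lemma sum_sq (m : ℕ) : ∑ f : Fin m → Bool, (Sg f)^2 = m * 2^m := by
  induction m with
  | zero => simp [Sg]
  | succ n ih =>
    rw [sum_split (fun f => (Sg f)^2)]
    have h : ∀ b : Bool, ∑ g : Fin n → Bool, (Sg (Fin.cons b g))^2
        = ∑ g : Fin n → Bool, ((Sg g)^2 + 2 * (if b then (1:ℝ) else -1) * Sg g + 1) := by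
      intro b; apply Finset.sum_congr rfl; intro g _; rw [Sg_cons]; cases b <;> simp <;> ring
    rw [Fintype.sum_bool, h true, h false]
    simp only [Finset.sum_add_distrib, Finset.sum_const, ← Finset.mul_sum, ih]
    simp
    push_cast
    ring

lemma sum_quad (m : ℕ) : ∑ f : Fin m → Bool, (Sg f)^4 = (3*(m:ℝ)^2 - 2*m) * 2^m := by
  induction m with
  | zero => simp [Sg]
  | succ n ih =>
    rw [sum_split (fun f => (Sg f)^4)]
    have h : ∀ b : Bool, ∑ g : Fin n → Bool, (Sg (Fin.cons b g))^4
        = ∑ g : Fin n → Bool, ((Sg g)^4 + 4 * (if b then (1:ℝ) else -1) * ((Sg g)^3 + Sg g) + 6 * (Sg g)^2 + 1) := by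
      intro b; apply Finset.sum_congr rfl; intro g _; rw [Sg_cons]; cases b <;> simp <;> ring
    rw [Fintype.sum_bool, h true, h false]
    simp only [Finset.sum_add_distrib, Finset.sum_const, ← Finset.mul_sum, ih, sum_sq]
    simp
    push_cast
    ring

lemma khintchine (m : ℕ) : Real.sqrt ((m:ℝ)/3) * 2^m ≤ ∑ f : Fin m → Bool, |Sg f| := by
  rcases Nat.eq_zero_or_pos m with hm | hm
  · subst hm; simp [Sg]
  set A := ∑ f : Fin m → Bool, |Sg f| with hA
  have hA0 : 0 ≤ A := Finset.sum_nonneg fun f _ => abs_nonneg _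
  -- Cauchy-Schwarz 1 : (∑ S²)² ≤ A * ∑ |S|³
  have cs1 : ((m:ℝ) * 2^m)^2 ≤ A * ∑ f : Fin m → Bool, |Sg f|^3 := by
    have := sum_mul_sq_le_sq_mul_sq Finset.univ
      (fun f : Fin m → Bool => Real.sqrt |Sg f|)
      (fun f : Fin m → Bool => |Sg f| * Real.sqrt |Sg f|)
    calc ((m:ℝ) * 2^m)^2 = (∑ f : Fin m → Bool,
            Real.sqrt |Sg f| * (|Sg f| * Real.sqrt |Sg f|))^2 := by
          rw [← sum_sq m]; congr 1; apply Finset.sum_congr rfl; intro f _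
          rw [show Real.sqrt |Sg f| * (|Sg f| * Real.sqrt |Sg f|)
              = (Real.sqrt |Sg f| * Real.sqrt |Sg f|) * |Sg f| by ring,
            Real.mul_self_sqrt (abs_nonneg _), ← abs_mul, abs_mul_self, sq]
      _ ≤ (∑ f : Fin m → Bool, Real.sqrt |Sg f| ^ 2) *
            ∑ f : Fin m → Bool, (|Sg f| * Real.sqrt |Sg f|)^2 := this
      _ = A * ∑ f : Fin m → Bool, |Sg f|^3 := by
          congr 1
          · apply Finset.sum_congr rfl; intro f _; exact Real.sq_sqrt (abs_nonneg _)
          · apply Finset.sum_congr rfl; intro f _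
            rw [mul_pow, Real.sq_sqrt (abs_nonneg _)]; ring
  -- Cauchy-Schwarz 2 : (∑|S|³)² ≤ (∑ S²)(∑ S⁴)
  have cs2 : (∑ f : Fin m → Bool, |Sg f|^3)^2 ≤ ((m:ℝ)*2^m) * ((3*(m:ℝ)^2 - 2*m) * 2^m) := by
    have := sum_mul_sq_le_sq_mul_sq Finset.univ
      (fun f : Fin m → Bool => |Sg f|) (fun f : Fin m → Bool => (Sg f)^2)
    calc (∑ f : Fin m → Bool, |Sg f|^3)^2
        = (∑ f : Fin m → Bool, |Sg f| * (Sg f)^2)^2 := by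
          congr 1; apply Finset.sum_congr rfl; intro f _
          rw [← sq_abs, pow_succ' (|Sg f|) 2]  -- |S|³ = |S| * |S|²
      _ ≤ (∑ f : Fin m → Bool, |Sg f|^2) * ∑ f : Fin m → Bool, ((Sg f)^2)^2 := this
      _ = ((m:ℝ)*2^m) * ((3*(m:ℝ)^2 - 2*m) * 2^m) := by
          rw [← sum_sq m, ← sum_quad m]; congr 1
          · apply Finset.sum_congr rfl; intro f _; exact sq_abs _
          · apply Finset.sum_congr rfl; intro f _; ring
  -- combine: (M2)³ ≤ A² * M4
  have hM2 : (0:ℝ) < (m:ℝ) * 2^m := by positivity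
  have key : ((m:ℝ) * 2^m)^3 ≤ A^2 * (3*(m:ℝ)^2 * 2^m) := by
    nlinarith [Finset.sum_nonneg (fun f (_ : f ∈ (Finset.univ : Finset (Fin m → Bool))) => pow_nonneg (abs_nonneg (Sg f)) 3), sq_nonneg A, hm, pow_pos (show (0:ℝ) < 2 by norm_num) m, (Nat.one_le_cast.mpr hm : (1:ℝ) ≤ m)]
  -- conclude
  have h2 : ((m:ℝ)/3) * (2^m)^2 ≤ A^2 := by
    have h3 : (0:ℝ) < 3*(m:ℝ)^2 * 2^m := by positivity
    rw [div_mul_eq_mul_div, div_le_iff₀ (by norm_num : (0:ℝ) < 3)]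
    nlinarith [key, pow_pos (show (0:ℝ) < 2 by norm_num) m]
  calc Real.sqrt ((m:ℝ)/3) * 2^m = Real.sqrt (((m:ℝ)/3) * (2^m)^2) := by
        rw [Real.sqrt_mul (by positivity), Real.sqrt_sq (by positivity)]
    _ ≤ Real.sqrt (A^2) := Real.sqrt_le_sqrt h2
    _ = A := Real.sqrt_sq hA0

lemma Sg_not {m : ℕ} (f : Fin m → Bool) : Sg (fun i => !(f i)) = - Sg f := by
  simp only [Sg, ← Finset.sum_neg_distrib]
  apply Finset.sum_congr rfl; intro i _; by_cases hfi : f i = true <;> simp [hfi]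

lemma sum_max0 (m : ℕ) :
    ∑ f : Fin m → Bool, max 0 (Sg f) = (∑ f : Fin m → Bool, |Sg f|) / 2 := by
  have hnot : Function.Involutive (fun f : Fin m → Bool => fun i => !(f i)) := by
    intro f; funext i; simp
  have hsymm : ∑ f : Fin m → Bool, max 0 (Sg f) = ∑ f : Fin m → Bool, max 0 (- Sg f) := by
    apply Fintype.sum_bijective _ hnot.bijective
    intro f
    rw [Sg_not f, neg_neg]
  have : 2 * ∑ f : Fin m → Bool, max 0 (Sg f) = ∑ f : Fin m → Bool, |Sg f| := by
    rw [two_mul]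
    nth_rewrite 2 [hsymm]
    rw [← Finset.sum_add_distrib]
    apply Finset.sum_congr rfl; intro f _
    rcases le_total (Sg f) 0 with h | h
    · rw [max_eq_left h, max_eq_right (by linarith), abs_of_nonpos h]; ring
    · rw [max_eq_right h, max_eq_left (by linarith), abs_of_nonneg h]; ring
  linarith

lemma row_sum (k m : ℕ) (j : Fin k) (G : (Fin m → Bool) → ℝ) :
    ∑ σ' : Fin k × Fin m → Bool, G (fun t => σ' (j, t))
      = (2^m : ℝ)^(k-1) * ∑ g : Fin m → Bool, G g := by
  have e1 : ∑ σ' : Fin k × Fin m → Bool, G (fun t => σ' (j, t))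
      = ∑ h : Fin k → Fin m → Bool, G (h j) :=
    Fintype.sum_equiv (Equiv.curry (Fin k) (Fin m) Bool) _ _ (fun σ' => rfl)
  have e2 : ∑ h : Fin k → Fin m → Bool, G (h j)
      = ∑ p : (Fin m → Bool) × ({i : Fin k // i ≠ j} → Fin m → Bool), G p.1 :=
    Fintype.sum_equiv (Equiv.piSplitAt j (fun _ => Fin m → Bool)) _ _ (fun h => rfl)
  rw [e1, e2, Fintype.sum_prod_type]
  have hcard : Fintype.card ({i : Fin k // i ≠ j} → Fin m → Bool) = (2^m)^(k-1) := by
    rw [Fintype.card_fun]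
    congr 1
    · simp [Fintype.card_fun]
    · rw [Fintype.card_subtype_compl, Fintype.card_subtype_eq]
      simp
  simp only [Finset.sum_const, Finset.card_univ, nsmul_eq_mul, hcard]
  rw [← Finset.mul_sum]
  push_cast
  ring

section Geom
variable {H : Type*} [NormedAddCommGroup H] [InnerProductSpace ℝ H]

lemma norm_val {k : ℕ} (e : Fin k → H) (he : Orthonormal ℝ e) (σ : Fin k → Bool) (j i : Fin k) :
    ‖e j - (if σ i then (1:ℝ) else -1) • e i‖ ^ 2
      = if i = j then (if σ i then 0 else 4) else 2 := by
  set c : ℝ := if σ i then 1 else -1 with hc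
  have hinner : ∀ a b : Fin k, (inner ℝ (e a) (e b) : ℝ) = if a = b then 1 else 0 :=
    orthonormal_iff_ite.mp he
  have hn : ∀ a : Fin k, ‖e a‖ ^ 2 = 1 := by
    intro a
    rw [← real_inner_self_eq_norm_sq, hinner a a]; simp
  rw [norm_sub_sq_real, real_inner_smul_right, hinner j i, norm_smul, mul_pow, hn, hn]
  have hcabs : ‖c‖ ^ 2 = 1 := by
    by_cases h : σ i = true <;> simp [hc, h]
  rw [hcabs]
  by_cases hij : i = j
  · subst hij
    by_cases h : σ i = true <;> simp [h, hc] <;> ring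
  · rw [if_neg (fun h => hij h.symm), if_neg hij]
    ring

lemma inf_val {k : ℕ} (hk : 0 < k) (e : Fin k → H) (he : Orthonormal ℝ e)
    (σ : Fin k → Bool) (j : Fin k) :
    Finset.univ.inf' ⟨⟨0, hk⟩, Finset.mem_univ _⟩
        (fun i => ‖e j - (if σ i then (1:ℝ) else -1) • e i‖ ^ 2)
      = if σ j then 0 else (if k = 1 then (4:ℝ) else 2) := by
  have hv : ∀ i, ‖e j - (if σ i then (1:ℝ) else -1) • e i‖ ^ 2
      = if i = j then (if σ i then 0 else 4) else 2 := fun i => norm_val e he σ j i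
  apply le_antisymm
  · by_cases hσ : σ j = true
    · refine (Finset.inf'_le _ (Finset.mem_univ j)).trans ?_
      rw [hv j]; simp [hσ]
    · by_cases hk1 : k = 1
      · refine (Finset.inf'_le _ (Finset.mem_univ j)).trans ?_
        rw [hv j]; simp [hσ, hk1]
      · have h2 : 2 ≤ k := by omega
        set i : Fin k := if j = ⟨0, hk⟩ then ⟨1, h2⟩ else ⟨0, hk⟩ with hi
        have hij : i ≠ j := by
          rw [hi]
          by_cases h : j = ⟨0, hk⟩
          · rw [if_pos h, h]
            intro hcon; simp [Fin.ext_iff] at hcon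
          · rw [if_neg h]; exact fun hcon => h hcon.symm
        refine (Finset.inf'_le _ (Finset.mem_univ i)).trans ?_
        rw [hv i, if_neg hij]; simp [hσ, hk1]
  · apply Finset.le_inf'
    intro i _
    rw [hv i]
    by_cases hij : i = j
    · subst hij
      by_cases hσ : σ i = true <;> simp [hσ] <;> split_ifs <;> norm_num
    · by_cases hk1 : k = 1
      · exfalso; subst hk1; exact hij (Subsingleton.elim i j)
      · by_cases hσ : σ j = true <;> simp [hσ, hij, hk1]

end Geom

/-- Lower bound on the empirical clustering Rademacher complexity for the orthonormal
    configuration with n = k·m data points (n/k copies of each basis vector eⱼ). -/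
theorem clustering_rademacher_lower_bound {H : Type*} [NormedAddCommGroup H]
    [InnerProductSpace ℝ H] (k m : ℕ) (hk : 0 < k) (e : Fin k → H)
    (he : Orthonormal ℝ e) :
    Real.sqrt ((k * m : ℝ) / 2) ≤
      (∑ σ' : Fin k × Fin m → Bool,
          Finset.univ.sup' Finset.univ_nonempty
            (fun σ : Fin k → Bool =>
              ∑ p : Fin k × Fin m, (if σ' p then (1 : ℝ) else -1) *
                Finset.univ.inf' ⟨⟨0, hk⟩, Finset.mem_univ _⟩
                  (fun i => ‖e p.1 - (if σ i then (1 : ℝ) else -1) • e i‖ ^ 2))) /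
        2 ^ (k * m) := by
  set c : ℝ := if k = 1 then (4:ℝ) else 2 with hc
  have hc2 : (2:ℝ) ≤ c := by by_cases h : k = 1 <;> simp [hc, h] <;> norm_num
  have hc0 : (0:ℝ) < c := by linarith
  -- Step 1: pointwise lower bound on the sup'
  have hsup : ∀ σ' : Fin k × Fin m → Bool,
      ∑ j : Fin k, c * max 0 (Sg (fun t => σ' (j, t))) ≤
      Finset.univ.sup' Finset.univ_nonempty
        (fun σ : Fin k → Bool =>
          ∑ p : Fin k × Fin m, (if σ' p then (1 : ℝ) else -1) *
            Finset.univ.inf' ⟨⟨0, hk⟩, Finset.mem_univ _⟩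
              (fun i => ‖e p.1 - (if σ i then (1 : ℝ) else -1) • e i‖ ^ 2)) := by
    intro σ'
    set σs : Fin k → Bool := fun j => decide (Sg (fun t => σ' (j, t)) < 0) with hσs
    refine le_trans ?_ (Finset.le_sup' _ (Finset.mem_univ σs))
    have hval : ∀ p : Fin k × Fin m,
        (if σ' p then (1 : ℝ) else -1) *
          Finset.univ.inf' ⟨⟨0, hk⟩, Finset.mem_univ _⟩
            (fun i => ‖e p.1 - (if σs i then (1 : ℝ) else -1) • e i‖ ^ 2)
        = (if σ' p then (1 : ℝ) else -1) * (if σs p.1 then 0 else c) := by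
      intro p; rw [inf_val hk e he σs p.1]
    rw [Finset.sum_congr rfl (fun p _ => hval p), Fintype.sum_prod_type]
    apply le_of_eq
    apply Finset.sum_congr rfl
    intro j _
    have : ∑ t : Fin m, (if σ' (j, t) then (1:ℝ) else -1) * (if σs j then 0 else c)
        = Sg (fun t => σ' (j, t)) * (if σs j then 0 else c) := by
      rw [Sg, Finset.sum_mul]
    rw [this]
    by_cases h : Sg (fun t => σ' (j, t)) < 0
    · have hb : σs j = true := by simp [hσs, h]
      rw [hb, if_pos rfl, max_eq_left (by linarith), mul_zero, mul_zero]
    · have hb : σs j = false := by simp [hσs]; exact not_lt.mp h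
      rw [hb, if_neg (by simp), max_eq_right (by rw [not_lt] at h; linarith)]
      ring
  -- Step 2: sum the lower bound over σ'
  have hbound : c * k * ((2:ℝ)^m)^(k-1) * (Real.sqrt ((m:ℝ)/3) * 2^m / 2) ≤
      ∑ σ' : Fin k × Fin m → Bool,
        Finset.univ.sup' Finset.univ_nonempty
          (fun σ : Fin k → Bool =>
            ∑ p : Fin k × Fin m, (if σ' p then (1 : ℝ) else -1) *
              Finset.univ.inf' ⟨⟨0, hk⟩, Finset.mem_univ _⟩
                (fun i => ‖e p.1 - (if σ i then (1 : ℝ) else -1) • e i‖ ^ 2)) := by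
    refine le_trans ?_ (Finset.sum_le_sum (fun σ' _ => hsup σ'))
    rw [Finset.sum_comm]
    have hrow : ∀ j : Fin k,
        ∑ σ' : Fin k × Fin m → Bool, c * max 0 (Sg (fun t => σ' (j, t)))
          = c * (((2:ℝ)^m)^(k-1) * ((∑ g : Fin m → Bool, |Sg g|) / 2)) := by
      intro j
      rw [← Finset.mul_sum, row_sum k m j (fun g => max 0 (Sg g)), sum_max0]
    rw [Finset.sum_congr rfl (fun j _ => hrow j), Finset.sum_const, Finset.card_univ,
      Fintype.card_fin, nsmul_eq_mul]
    have hkh := khintchine m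
    have h2m : (0:ℝ) < (2:ℝ)^m := by positivity
    have hpow : (0:ℝ) ≤ ((2:ℝ)^m)^(k-1) := by positivity
    have hk0 : (0:ℝ) ≤ (k:ℝ) := Nat.cast_nonneg k
    nlinarith [mul_le_mul_of_nonneg_left hkh (mul_nonneg (mul_nonneg (mul_nonneg hk0 (le_of_lt hc0)) hpow) (by norm_num : (0:ℝ) ≤ 1/2))]
  -- Step 3: conclude
  rw [le_div_iff₀ (by positivity : (0:ℝ) < 2^(k*m))]
  refine le_trans ?_ hbound
  have hpow : ((2:ℝ)^m)^(k-1) * 2^m = 2^(k*m) := by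
    obtain ⟨k', rfl⟩ : ∃ k', k = k' + 1 := ⟨k - 1, by omega⟩
    rw [← pow_mul, ← pow_add]
    congr 1
    simp
    ring
  have key : Real.sqrt ((k * m : ℝ) / 2) ≤ c * k / 2 * Real.sqrt ((m:ℝ)/3) := by
    have hck : (0:ℝ) ≤ c * k / 2 := by positivity
    rw [show c * k / 2 * Real.sqrt ((m:ℝ)/3)
        = Real.sqrt ((c * k / 2)^2 * ((m:ℝ)/3)) by
      rw [Real.sqrt_mul (by positivity), Real.sqrt_sq hck]]
    apply Real.sqrt_le_sqrt
    have hm0 : (0:ℝ) ≤ (m:ℝ) := Nat.cast_nonneg m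
    by_cases h : k = 1
    · subst h
      have hcc : c = 4 := by simp [hc]
      rw [hcc]
      push_cast
      nlinarith
    · have hk2 : (2:ℝ) ≤ (k:ℝ) := by
        have : 2 ≤ k := by omega
        exact_mod_cast this
      have hcc : c = 2 := by simp [hc, h]
      rw [hcc]
      nlinarith [mul_nonneg (mul_nonneg (by linarith : (0:ℝ) ≤ (k:ℝ)) hm0) (by linarith : (0:ℝ) ≤ 2*(k:ℝ)-3)]
  calc Real.sqrt ((k * m : ℝ) / 2) * 2^(k*m)
      ≤ (c * k / 2 * Real.sqrt ((m:ℝ)/3)) * 2^(k*m) := by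
        apply mul_le_mul_of_nonneg_right key (by positivity)
    _ = c * k * ((2:ℝ)^m)^(k-1) * (Real.sqrt ((m:ℝ)/3) * 2^m / 2) := by
        rw [← hpow]; ring
end
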